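/- arXiv:1701.04183 — 4 statements merged into one kernel-verified Lean document; each statement's English description precedes it below -/
import Mathlib

section
/- Let C be an additive code of length n over GF(4) with coordinates indexed 0, …, n−1, and let A, B ⊆ {1, …, n−1}. Suppose there exist x, y ∈ C^⊥ (the trace dual) such that supp(x) ⊆ {0} ∪ A, supp(y) ⊆ {0} ∪ B, and x₀, y₀ are distinct nonzero elements of GF(4). Then any two codewords t, t' ∈ C satisfying tᵢ = t'ᵢ for all i ∈ A ∪ B must satisfy t₀ = t'₀; that is, the two sets of shares {tᵢ : i ∈ A} and {tᵢ : i ∈ B} determine the secret t₀. -/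
/-- `GF(4)`, the field with 4 elements. -/
abbrev F4 := GaloisField 2 2

/-- The trace map `Tr : GF(4) → GF(2)`, `Tr(x) = x + x²` (valued in the prime subfield). -/
noncomputable def tr (x : F4) : F4 := x + x ^ 2

/-- The conjugate `ȳ = y²` of an element of `GF(4)`. -/
noncomputable def conj (x : F4) : F4 := x ^ 2

/-- The trace dual of a code: all vectors whose trace inner product with every
codeword is zero. -/
def traceDual {n : ℕ} (C : Set (Fin n → F4)) : Set (Fin n → F4) :=
  {x | ∀ c ∈ C, ∑ i, tr (x i * conj (c i)) = 0}

lemma tr_eq_zero_cases (a : F4) (h : tr a = 0) : a = 0 ∨ a = 1 := by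
  have h2 : a * (1 + a) = 0 := by
    have : a * (1 + a) = a + a ^ 2 := by ring
    rw [this]; exact h
  rcases mul_eq_zero.mp h2 with h3 | h3
  · exact Or.inl h3
  · right
    have h4 : (2 : F4) = 0 := CharP.cast_eq_zero F4 2
    linear_combination h3 - h4

/-- If the trace dual of an additive code `C` over `GF(4)` contains two codewords `x, y`
supported in `{0} ∪ A` and `{0} ∪ B` respectively, whose coordinates at `0` are distinct
nonzero elements of `GF(4)`, then the shares in `A` and `B` determine the secret: any two
codewords of `C` agreeing on `A ∪ B` have the same coordinate at `0`. -/
theorem two_dual_words_determine_secret (n : ℕ) (C : AddSubgroup (Fin (n + 1) → F4))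
    (A B : Set (Fin (n + 1))) (hA : 0 ∉ A) (hB : 0 ∉ B)
    (x y : Fin (n + 1) → F4)
    (hx : x ∈ traceDual (C : Set (Fin (n + 1) → F4)))
    (hy : y ∈ traceDual (C : Set (Fin (n + 1) → F4)))
    (hxsupp : {i | x i ≠ 0} ⊆ insert 0 A) (hysupp : {i | y i ≠ 0} ⊆ insert 0 B)
    (hx0 : x 0 ≠ 0) (hy0 : y 0 ≠ 0) (hxy0 : x 0 ≠ y 0)
    (t t' : Fin (n + 1) → F4) (ht : t ∈ C) (ht' : t' ∈ C)
    (hagree : ∀ i ∈ A ∪ B, t i = t' i) :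
    t 0 = t' 0 := by
  set d : Fin (n + 1) → F4 := t - t' with hd_def
  have hd : d ∈ C := sub_mem ht ht'
  have hdz : ∀ i ∈ A ∪ B, d i = 0 := by
    intro i hi
    simp [hd_def, sub_eq_zero, hagree i hi]
  have main : ∀ (z : Fin (n + 1) → F4) (S : Set (Fin (n + 1))),
      z ∈ traceDual (C : Set (Fin (n + 1) → F4)) → {i | z i ≠ 0} ⊆ insert 0 S →
      S ⊆ A ∪ B → tr (z 0 * conj (d 0)) = 0 := by
    intro z S hz hsupp hS
    have hsum := hz d hd
    rw [← hsum]
    symm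
    apply Finset.sum_eq_single 0
    · intro i _ hi0
      by_cases h : z i = 0
      · simp [h, tr, conj]
      · have hiS : i ∈ insert 0 S := hsupp h
        have : i ∈ S := by
          rcases hiS with h' | h'
          · exact absurd h' hi0
          · exact h'
        have : d i = 0 := hdz i (hS this)
        simp [this, tr, conj]
    · intro h; simp at h
  have hxd := tr_eq_zero_cases _ (main x A hx hxsupp (Set.subset_union_left))
  have hyd := tr_eq_zero_cases _ (main y B hy hysupp (Set.subset_union_right))
  have hd0 : d 0 = 0 := by
    by_contra hne
    have hc : conj (d 0) ≠ 0 := by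
      simp [conj, pow_eq_zero_iff]; exact hne
    have hx1 : x 0 * conj (d 0) = 1 := by
      rcases hxd with h | h
      · exact absurd h (mul_ne_zero hx0 hc)
      · exact h
    have hy1 : y 0 * conj (d 0) = 1 := by
      rcases hyd with h | h
      · exact absurd h (mul_ne_zero hy0 hc)
      · exact h
    exact hxy0 (mul_right_cancel₀ hc (hx1.trans hy1.symm))
  have : t 0 - t' 0 = 0 := hd0
  exact sub_eq_zero.mp this
end

section
/- Let C be an additive code of length n over GF(4) with coordinates indexed 0, …, n−1, and let A ⊆ {1, …, n−1}. Then the following are equivalent: (i) every two codewords t, t' ∈ C with tᵢ = t'ᵢ for all i ∈ A satisfy t₀ = t'₀ (the shares in A determine the secret); (ii) there exist x, y ∈ C^⊥ with supp(x) ⊆ {0} ∪ A, supp(y) ⊆ {0} ∪ A, and x₀, y₀ distinct nonzero elements of GF(4). In particular, a single dual codeword with nonzero first coordinate is not enough: two dual codewords with distinct nonzero first coordinates are needed, so the scheme is a 2-step secret sharing scheme. -/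
noncomputable instance : Fintype F4 := Fintype.ofFinite F4

lemma F4_card : Fintype.card F4 = 4 := by
  have := GaloisField.card 2 2 (by norm_num)
  rw [Nat.card_eq_fintype_card] at this
  simpa using this

lemma F4_pow4 (x : F4) : x ^ 4 = x := by
  have := FiniteField.pow_card x
  rwa [F4_card] at this

lemma exists_b : ∃ b : F4, b ≠ 0 ∧ b ≠ 1 := by
  classical
  by_contra h
  push_neg at h
  have hsub : (Finset.univ : Finset F4) ⊆ {0, 1} := by
    intro b _
    rcases eq_or_ne b 0 with hb | hb
    · simp [hb]
    · simp [h b hb]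
  have := Finset.card_le_card hsub
  rw [Finset.card_univ, F4_card] at this
  have h2 : ({0, 1} : Finset F4).card ≤ 2 := Finset.card_insert_le _ _ |>.trans (by simp)
  omega

lemma tr_mul_sq (a w : F4) : tr (a * w ^ 2) = a * w * (w + a) := by
  unfold tr
  have h1 : (a * w ^ 2) ^ 2 = a ^ 2 * w ^ 4 := by ring
  rw [h1, F4_pow4 w]
  ring

lemma tr_vanish {a w : F4} (ha : a ≠ 0) (h : tr (a * w ^ 2) = 0) : w = 0 ∨ w = a := by
  rw [tr_mul_sq] at h
  rcases mul_eq_zero.mp h with h1 | h2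
  · rcases mul_eq_zero.mp h1 with h3 | h4
    · exact absurd h3 ha
    · exact Or.inl h4
  · right
    have : w = -a := eq_neg_of_add_eq_zero_left h2
    rwa [CharTwo.neg_eq] at this

lemma tr_add (x y : F4) : tr (x + y) = tr x + tr y := by
  unfold tr
  rw [CharTwo.add_sq]
  ring

lemma tr_eq_zero_or_one (x : F4) : tr x = 0 ∨ tr x = 1 := by
  have hsq : tr x ^ 2 = tr x := by
    unfold tr
    rw [CharTwo.add_sq]
    have : (x ^ 2) ^ 2 = x ^ 4 := by ring
    rw [this, F4_pow4]
    ring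
  have : tr x * (tr x - 1) = 0 := by
    have : tr x * (tr x - 1) = tr x ^ 2 - tr x := by ring
    rw [this, hsq, sub_self]
  rcases mul_eq_zero.mp this with h | h
  · exact Or.inl h
  · exact Or.inr (by linear_combination h)

open Classical in
noncomputable def tr2 (x : F4) : ZMod 2 := if tr x = 0 then 0 else 1

lemma tr2_spec (x : F4) : algebraMap (ZMod 2) F4 (tr2 x) = tr x := by
  unfold tr2
  rcases tr_eq_zero_or_one x with h | h
  · rw [h]; simp
  · rw [if_neg (by rw [h]; exact one_ne_zero), h]; simp

lemma algebraMap_inj : Function.Injective (algebraMap (ZMod 2) F4) :=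
  (algebraMap (ZMod 2) F4).injective

lemma tr2_add (x y : F4) : tr2 (x + y) = tr2 x + tr2 y := by
  apply algebraMap_inj
  rw [map_add, tr2_spec, tr2_spec, tr2_spec, tr_add]

lemma tr2_zero : tr2 (0 : F4) = 0 := by
  unfold tr2
  rw [if_pos]
  unfold tr
  ring

lemma tr2_eq_zero {x : F4} (h : tr2 x = 0) : tr x = 0 := by
  rw [← tr2_spec, h, map_zero]

/-- The inner functional `z ↦ Tr₂(x z²)` as a `ZMod 2`-linear map. -/
noncomputable def Binner (x : F4) : F4 →ₗ[ZMod 2] ZMod 2 :=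
  AddMonoidHom.toZModLinearMap 2 (AddMonoidHom.mk' (fun z => tr2 (x * z ^ 2)) (by
    intro z w
    have h : x * (z + w) ^ 2 = x * z ^ 2 + x * w ^ 2 := by
      rw [CharTwo.add_sq]; ring
    rw [h, tr2_add]))

lemma Binner_apply (x z : F4) : Binner x z = tr2 (x * z ^ 2) := rfl

/-- The trace bilinear form on `GF(4)` over `GF(2)`. -/
noncomputable def Bform : LinearMap.BilinForm (ZMod 2) F4 :=
  AddMonoidHom.toZModLinearMap 2 (AddMonoidHom.mk' Binner (by
    intro x y
    ext z
    simp only [Binner_apply, LinearMap.add_apply]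
    rw [add_mul, tr2_add]))

lemma Bform_apply (x z : F4) : Bform x z = tr2 (x * z ^ 2) := rfl

lemma Bform_nondeg : Bform.Nondegenerate := by
  refine LinearMap.BilinForm.Nondegenerate.ofSeparatingLeft ?_
  intro x hx
  by_contra hx0
  have h1 : tr (x * (1 : F4) ^ 2) = 0 := tr2_eq_zero (hx 1)
  rcases tr_vanish hx0 h1 with h | h
  · exact one_ne_zero h
  · obtain ⟨b, hb0, hb1⟩ := exists_b
    have h2 : tr (x * b ^ 2) = 0 := tr2_eq_zero (hx b)
    rcases tr_vanish hx0 h2 with h' | h'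
    · exact hb0 h'
    · rw [← h] at h'
      exact hb1 h'

lemma repr_functional (φ : F4 →ₗ[ZMod 2] ZMod 2) : ∃ x : F4, ∀ z, tr2 (x * z ^ 2) = φ z := by
  refine ⟨(Bform.toDual Bform_nondeg).symm φ, fun z => ?_⟩
  have := LinearMap.BilinForm.apply_toDual_symm_apply (B := Bform) (hB := Bform_nondeg) φ z
  rw [← this, Bform_apply]

lemma exists_dual_word (n : ℕ) (C : AddSubgroup (Fin (n + 1) → F4))
    (A : Set (Fin (n + 1))) (hA : 0 ∉ A)
    (hsec : ∀ t ∈ C, (∀ i ∈ A, t i = 0) → t 0 = 0) (a : F4) :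
    ∃ x ∈ traceDual (C : Set (Fin (n + 1) → F4)),
      {i | x i ≠ 0} ⊆ insert 0 A ∧ x 0 = a := by
  classical
  -- restriction-to-A map
  let fL : (Fin (n + 1) → F4) →ₗ[ZMod 2] (Fin (n + 1) → F4) :=
    AddMonoidHom.toZModLinearMap 2 (AddMonoidHom.mk' (fun t => fun i => if i ∈ A then t i else 0)
      (by intro t s; funext i; simp only [Pi.add_apply]; by_cases h : i ∈ A <;> simp [h]))
  have fL_apply : ∀ (t : Fin (n + 1) → F4) (i), fL t i = if i ∈ A then t i else 0 := fun _ _ => rfl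
  -- secret functional
  let gL : (Fin (n + 1) → F4) →ₗ[ZMod 2] ZMod 2 :=
    AddMonoidHom.toZModLinearMap 2 (AddMonoidHom.mk' (fun t => tr2 (a * (t 0) ^ 2))
      (by
        intro t s
        show tr2 (a * ((t + s) 0) ^ 2) = tr2 (a * (t 0) ^ 2) + tr2 (a * (s 0) ^ 2)
        have h : a * ((t + s) 0) ^ 2 = a * (t 0) ^ 2 + a * (s 0) ^ 2 := by
          simp only [Pi.add_apply]
          rw [CharTwo.add_sq]
          ring
        rw [h, tr2_add]))
  have gL_apply : ∀ (t : Fin (n + 1) → F4), gL t = tr2 (a * (t 0) ^ 2) := fun _ => rfl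
  let Csub : Submodule (ZMod 2) (Fin (n + 1) → F4) := AddSubgroup.toZModSubmodule 2 C
  let f' : Csub →ₗ[ZMod 2] (Fin (n + 1) → F4) := fL.comp Csub.subtype
  let g' : Csub →ₗ[ZMod 2] ZMod 2 := gL.comp Csub.subtype
  have hker : LinearMap.ker f' ≤ LinearMap.ker g' := by
    rintro ⟨t, ht⟩ h
    rw [LinearMap.mem_ker] at h ⊢
    have hft : fL t = 0 := h
    have hzero : ∀ i ∈ A, t i = 0 := by
      intro i hi
      have := congrFun hft i
      rwa [fL_apply, if_pos hi] at this
    have ht0 : t 0 = 0 := hsec t ht hzero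
    show gL t = 0
    rw [gL_apply, ht0]
    simpa using tr2_zero
  let h1 := (LinearMap.ker f').liftQ g' hker
  let e := f'.quotKerEquivRange
  obtain ⟨H, hH⟩ := LinearMap.exists_extend (h1.comp e.symm.toLinearMap)
  have key : ∀ t, ∀ ht : t ∈ C, H (fL t) = gL t := by
    intro t ht
    have hmem : fL t ∈ LinearMap.range f' := ⟨⟨t, ht⟩, rfl⟩
    have h2 : H (fL t) = (h1.comp e.symm.toLinearMap) ⟨fL t, hmem⟩ := by
      conv_lhs => rw [show fL t = (LinearMap.range f').subtype ⟨fL t, hmem⟩ from rfl]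
      rw [← hH]
      rfl
    have h3 : e (Submodule.Quotient.mk ⟨t, ht⟩) = ⟨fL t, hmem⟩ :=
      Subtype.ext (f'.quotKerEquivRange_apply_mk ⟨t, ht⟩)
    have h4 : e.symm ⟨fL t, hmem⟩ = Submodule.Quotient.mk ⟨t, ht⟩ := by
      rw [← h3, LinearEquiv.symm_apply_apply]
    rw [h2]
    simp only [LinearMap.comp_apply, LinearEquiv.coe_coe, h4]
    have : h1 (Submodule.Quotient.mk ⟨t, ht⟩) = g' ⟨t, ht⟩ := by
      simp [h1, Submodule.liftQ_apply]
    rw [this]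
    rfl
  -- coordinatewise representation
  choose xs hxs using fun i : Fin (n + 1) =>
    repr_functional (H.comp (LinearMap.single (ZMod 2) (fun _ : Fin (n + 1) => F4) i))
  set x : Fin (n + 1) → F4 := fun i => if i = 0 then a else if i ∈ A then xs i else 0 with hx
  have hx0 : x 0 = a := by simp [hx]
  refine ⟨x, ?_, ?_, hx0⟩
  · -- x ∈ traceDual C
    intro c hc
    have hsum : ∑ i, tr2 (x i * (c i) ^ 2) = 0 := by
      have hHfc : H (fL c) = ∑ i, tr2 (xs i * (fL c i) ^ 2) := by
        have hdecomp : fL c = ∑ i, Pi.single i (fL c i) := by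
          funext j
          rw [Finset.sum_apply]
          simp [Pi.single_apply]
        conv_lhs => rw [hdecomp]
        rw [map_sum]
        congr 1
        funext i
        have : (Pi.single i (fL c i) : Fin (n + 1) → F4) =
            LinearMap.single (ZMod 2) (fun _ : Fin (n + 1) => F4) i (fL c i) := rfl
        rw [this, ← LinearMap.comp_apply, hxs i]
      have hterm : ∀ i : Fin (n + 1),
          tr2 (x i * (c i) ^ 2) = (if i = 0 then tr2 (a * (c 0) ^ 2) else tr2 (xs i * (fL c i) ^ 2)) := by
        intro i
        by_cases h0 : i = 0
        · subst h0
          simp [hx]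
        · rw [if_neg h0]
          by_cases hiA : i ∈ A
          · rw [hx]
            simp only [if_neg h0, if_pos hiA, fL_apply]
          · rw [hx]
            simp only [if_neg h0, if_neg hiA, fL_apply]
            rw [zero_mul]
            have : xs i * (0 : F4) ^ 2 = 0 := by ring
            rw [this]
      have hzero0 : tr2 (xs 0 * (fL c 0) ^ 2) = 0 := by
        rw [fL_apply, if_neg hA]
        have : xs 0 * (0 : F4) ^ 2 = 0 := by ring
        rw [this, tr2_zero]
      calc ∑ i, tr2 (x i * (c i) ^ 2)
          = ∑ i, (if i = 0 then tr2 (a * (c 0) ^ 2) else tr2 (xs i * (fL c i) ^ 2)) := by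
            exact Finset.sum_congr rfl (fun i _ => hterm i)
        _ = (if (0 : Fin (n + 1)) = 0 then tr2 (a * (c 0) ^ 2) else tr2 (xs 0 * (fL c 0) ^ 2)) +
              ∑ i ∈ Finset.univ.erase 0,
                (if i = 0 then tr2 (a * (c 0) ^ 2) else tr2 (xs i * (fL c i) ^ 2)) :=
            (Finset.add_sum_erase _ _ (Finset.mem_univ 0)).symm
        _ = tr2 (a * (c 0) ^ 2) + ∑ i ∈ Finset.univ.erase 0, tr2 (xs i * (fL c i) ^ 2) := by
            rw [if_pos rfl]
            congr 1
            refine Finset.sum_congr rfl (fun i hi => ?_)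
            rw [if_neg (Finset.ne_of_mem_erase hi)]
        _ = tr2 (a * (c 0) ^ 2) + ∑ i, tr2 (xs i * (fL c i) ^ 2) := by
            rw [Finset.sum_erase (f := fun i => tr2 (xs i * (fL c i) ^ 2)) Finset.univ hzero0]
        _ = tr2 (a * (c 0) ^ 2) + H (fL c) := by rw [hHfc]
        _ = tr2 (a * (c 0) ^ 2) + tr2 (a * (c 0) ^ 2) := by rw [key c hc, gL_apply]
        _ = 0 := CharTwo.add_self_eq_zero _
    have : ∑ i, tr (x i * conj (c i)) = algebraMap (ZMod 2) F4 (∑ i, tr2 (x i * (c i) ^ 2)) := by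
      rw [map_sum]
      exact Finset.sum_congr rfl (fun i _ => by rw [tr2_spec]; rfl)
    rw [this, hsum, map_zero]
  · intro i hi
    simp only [Set.mem_setOf_eq] at hi
    by_cases h0 : i = 0
    · subst h0; exact Set.mem_insert 0 A
    · by_cases hiA : i ∈ A
      · exact Set.mem_insert_of_mem _ hiA
      · exfalso
        apply hi
        rw [hx]
        simp [h0, hiA]

lemma tr_zero' : tr (0 : F4) = 0 := by unfold tr; ring

lemma dual_single_term {n : ℕ} (C : AddSubgroup (Fin (n + 1) → F4))
    (A : Set (Fin (n + 1))) {z s : Fin (n + 1) → F4}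
    (hz : z ∈ traceDual (C : Set (Fin (n + 1) → F4)))
    (hzs : {i | z i ≠ 0} ⊆ insert 0 A)
    (hs : s ∈ C) (hsA : ∀ i ∈ A, s i = 0) :
    tr (z 0 * conj (s 0)) = 0 := by
  classical
  have hsum := hz s hs
  have : ∑ i, tr (z i * conj (s i)) = tr (z 0 * conj (s 0)) := by
    refine Finset.sum_eq_single_of_mem 0 (Finset.mem_univ 0) (fun i _ hi0 => ?_)
    by_cases hiA : i ∈ A
    · rw [hsA i hiA]
      have : conj (0 : F4) = 0 := by unfold conj; ring
      rw [this, mul_zero, tr_zero']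
    · have hzi : z i = 0 := by
        by_contra hne
        rcases hzs hne with h | h
        · exact hi0 h
        · exact hiA h
      rw [hzi, zero_mul, tr_zero']
  rw [← this, hsum]

/-- The shares in `A` determine the secret coordinate `t 0` if and only if the trace dual
of `C` contains two codewords supported in `{0} ∪ A` whose coordinates at `0` are
distinct nonzero elements of `GF(4)` (a 2-step secret sharing scheme). -/
theorem shares_determine_secret_iff_two_dual_words (n : ℕ)
    (C : AddSubgroup (Fin (n + 1) → F4))
    (A : Set (Fin (n + 1))) (hA : 0 ∉ A) :
    (∀ t ∈ C, ∀ t' ∈ C, (∀ i ∈ A, t i = t' i) → t 0 = t' 0) ↔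
      (∃ x ∈ traceDual (C : Set (Fin (n + 1) → F4)),
        ∃ y ∈ traceDual (C : Set (Fin (n + 1) → F4)),
          {i | x i ≠ 0} ⊆ insert 0 A ∧ {i | y i ≠ 0} ⊆ insert 0 A ∧
          x 0 ≠ 0 ∧ y 0 ≠ 0 ∧ x 0 ≠ y 0) := by
  constructor
  · intro hsec
    obtain ⟨b, hb0, hb1⟩ := exists_b
    have hs : ∀ t ∈ C, (∀ i ∈ A, t i = 0) → t 0 = 0 := by
      intro t ht h
      have := hsec t ht 0 C.zero_mem (fun i hi => by simpa using h i hi)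
      simpa using this
    obtain ⟨x, hx, hxs, hx0⟩ := exists_dual_word n C A hA hs 1
    obtain ⟨y, hy, hys, hy0⟩ := exists_dual_word n C A hA hs b
    exact ⟨x, hx, y, hy, hxs, hys, by rw [hx0]; exact one_ne_zero,
      by rw [hy0]; exact hb0, by rw [hx0, hy0]; exact fun h => hb1 h.symm⟩
  · rintro ⟨x, hx, y, hy, hxs, hys, hx0, hy0, hxy⟩ t ht t' ht' hagree
    set s := t - t' with hsdef
    have hsC : s ∈ C := C.sub_mem ht ht'
    have hsA : ∀ i ∈ A, s i = 0 := by
      intro i hi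
      simp [hsdef, sub_eq_zero, hagree i hi]
    have h1 : tr (x 0 * (s 0) ^ 2) = 0 := dual_single_term C A hx hxs hsC hsA
    have h2 : tr (y 0 * (s 0) ^ 2) = 0 := dual_single_term C A hy hys hsC hsA
    have hs0 : s 0 = 0 := by
      rcases tr_vanish hx0 h1 with h | h
      · exact h
      · rcases tr_vanish hy0 h2 with h' | h'
        · exact h'
        · exact absurd (h.symm.trans h') hxy
    simpa [hsdef, sub_eq_zero] using (show s 0 = 0 from hs0)
end

section
/- Let 𝒢₆ ⊆ GF(4)⁶ be the hexacode, the GF(4)-linear span of (1,0,0,1,ω,ω), (0,1,0,ω,1,ω), (0,0,1,ω,ω,1). For every coordinate j ∈ {0, …, 5} and every nonzero a ∈ GF(4): exactly 10 codewords c ∈ 𝒢₆ satisfy wt(c) = 4 and c_j = a, and exactly 6 codewords c ∈ 𝒢₆ satisfy wt(c) = 6 and c_j = a. (That is, the codewords of each nonzero weight of 𝒢₆ form generalized 1-designs of type 3, with μ(4, e1) = 10 and μ(6, e1) = 6 for every weight-1 vector e1.) -/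
/-- The Hamming weight: the number of nonzero coordinates. -/
noncomputable def wt {n : ℕ} (c : Fin n → F4) : ℕ := {i | c i ≠ 0}.ncard

/-- The hexacode: the `GF(4)`-linear span of `(1,0,0,1,ω,ω)`, `(0,1,0,ω,1,ω)`,
`(0,0,1,ω,ω,1)`. -/
noncomputable def hexacode (ω : F4) : Submodule F4 (Fin 6 → F4) :=
  Submodule.span F4 {![1,0,0,1,ω,ω], ![0,1,0,ω,1,ω], ![0,0,1,ω,ω,1]}

/-! ### A computable model of `GF(4)` -/

/-- Model of `GF(4)`: pairs `(u, v)` representing `u + v·ω`. -/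
abbrev K := ZMod 2 × ZMod 2

/-- Model multiplication corresponding to `ω² = ω + 1`. -/
def kmul (a b : K) : K := (a.1*b.1 + a.2*b.2, a.1*b.2 + a.2*b.1 + a.2*b.2)

def g1k : Fin 6 → K := ![(1,0),(0,0),(0,0),(1,0),(0,1),(0,1)]
def g2k : Fin 6 → K := ![(0,0),(1,0),(0,0),(0,1),(1,0),(0,1)]
def g3k : Fin 6 → K := ![(0,0),(0,0),(1,0),(0,1),(0,1),(1,0)]

/-- Model codeword from coefficients. -/
def mc (p : K × K × K) : Fin 6 → K :=
  fun i => kmul p.1 (g1k i) + kmul p.2.1 (g2k i) + kmul p.2.2 (g3k i)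

/-- Model Hamming weight. -/
def mwt (w : Fin 6 → K) : ℕ := (Finset.univ.filter fun i => w i ≠ 0).card

/-- Embedding of the model into `GF(4)`. -/
noncomputable def phi (ω : F4) (a : K) : F4 :=
  ZMod.castHom (dvd_refl 2) F4 a.1 + ZMod.castHom (dvd_refl 2) F4 a.2 * ω

section model
variable {ω : F4}

lemma zmod2_cases : ∀ u : ZMod 2, u = 0 ∨ u = 1 := by decide

lemma two_eq_zero : (2 : F4) = 0 := by
  have := CharP.cast_eq_zero F4 2; push_cast at this; exact this

lemma omega_ne_zero (hω : ω ^ 2 = ω + 1) : ω ≠ 0 := by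
  intro h; rw [h] at hω; simp at hω

lemma omega_ne_one (hω : ω ^ 2 = ω + 1) : ω ≠ 1 := by
  intro h
  exact one_ne_zero (α := F4) (by rw [h] at hω; linear_combination hω + two_eq_zero)

lemma omega_add_one_ne_zero (hω : ω ^ 2 = ω + 1) : ω + 1 ≠ 0 := by
  intro h
  have h1 : (1 : F4) + 1 = 0 := by linear_combination two_eq_zero
  have : ω = 1 := by linear_combination h - h1
  exact omega_ne_one hω this

lemma phi_zero : phi ω 0 = 0 := by simp [phi]

lemma phi_one : phi ω (1,0) = 1 := by simp [phi]

lemma phi_omega : phi ω (0,1) = ω := by simp [phi]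

lemma phi_add (a b : K) : phi ω (a + b) = phi ω a + phi ω b := by
  simp only [phi, Prod.fst_add, Prod.snd_add, map_add]; ring

lemma phi_mul (hω : ω ^ 2 = ω + 1) (a b : K) :
    phi ω (kmul a b) = phi ω a * phi ω b := by
  simp only [phi, kmul, map_add, map_mul]
  linear_combination (-(ZMod.castHom (dvd_refl 2) F4 a.2 * ZMod.castHom (dvd_refl 2) F4 b.2)) * hω

lemma phi_eq_zero (hω : ω ^ 2 = ω + 1) {a : K} (h : phi ω a = 0) : a = 0 := by
  obtain ⟨a1, a2⟩ := a
  rcases zmod2_cases a1 with h1 | h1 <;> subst h1 <;>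
    rcases zmod2_cases a2 with h2 | h2 <;> subst h2
  · rfl
  · simp [phi] at h; exact absurd h (omega_ne_zero hω)
  · simp [phi] at h
  · simp [phi] at h
    exact absurd (by linear_combination h : ω + 1 = 0) (omega_add_one_ne_zero hω)

lemma phi_inj (hω : ω ^ 2 = ω + 1) : Function.Injective (phi ω) := by
  intro a b h
  have h2 : phi ω (a + b) = 0 := by
    rw [phi_add, h]
    linear_combination (phi ω b) * two_eq_zero
  have := phi_eq_zero hω h2
  obtain ⟨a1, a2⟩ := a; obtain ⟨b1, b2⟩ := b
  rcases zmod2_cases a1 with h | h <;> subst h <;>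
    rcases zmod2_cases a2 with h | h <;> subst h <;>
    rcases zmod2_cases b1 with h | h <;> subst h <;>
    rcases zmod2_cases b2 with h | h <;> subst h <;>
    first | rfl | (exact absurd this (by decide))

lemma phi_surj (hω : ω ^ 2 = ω + 1) : Function.Surjective (phi ω) := by
  letI : Fintype F4 := Fintype.ofFinite F4
  have hcard : Fintype.card F4 = 4 := by
    have := GaloisField.card 2 2 (by norm_num)
    rw [Nat.card_eq_fintype_card] at this; simpa using this
  exact ((Fintype.bijective_iff_injective_and_card (phi ω)).2
    ⟨phi_inj hω, by simp [hcard]⟩).surjective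

lemma phi_g1 (i : Fin 6) : phi ω (g1k i) = ![1,0,0,1,ω,ω] i := by
  fin_cases i
  · exact phi_one
  · exact phi_zero
  · exact phi_zero
  · exact phi_one
  · exact phi_omega
  · exact phi_omega

lemma phi_g2 (i : Fin 6) : phi ω (g2k i) = ![0,1,0,ω,1,ω] i := by
  fin_cases i
  · exact phi_zero
  · exact phi_one
  · exact phi_zero
  · exact phi_omega
  · exact phi_one
  · exact phi_omega

lemma phi_g3 (i : Fin 6) : phi ω (g3k i) = ![0,0,1,ω,ω,1] i := by
  fin_cases i
  · exact phi_zero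
  · exact phi_zero
  · exact phi_one
  · exact phi_omega
  · exact phi_omega
  · exact phi_one

lemma phi_mc (hω : ω ^ 2 = ω + 1) (p : K × K × K) (i : Fin 6) :
    phi ω (mc p i) = phi ω p.1 * ![1,0,0,1,ω,ω] i + phi ω p.2.1 * ![0,1,0,ω,1,ω] i
      + phi ω p.2.2 * ![0,0,1,ω,ω,1] i := by
  rw [mc, phi_add, phi_add, phi_mul hω, phi_mul hω, phi_mul hω,
    phi_g1, phi_g2, phi_g3]

lemma mem_hexacode_iff (hω : ω ^ 2 = ω + 1) (c : Fin 6 → F4) :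
    c ∈ hexacode ω ↔ ∃ p : K × K × K, c = fun i => phi ω (mc p i) := by
  have hG : ∀ (x y z : F4) (p : K × K × K), phi ω p.1 = x → phi ω p.2.1 = y →
      phi ω p.2.2 = z →
      (x • ![1,0,0,1,ω,ω] + (y • ![0,1,0,ω,1,ω] + z • ![0,0,1,ω,ω,1]))
        = fun i => phi ω (mc p i) := by
    intro x y z p hx hy hz
    funext i
    rw [phi_mc hω, hx, hy, hz]
    simp only [Pi.add_apply, Pi.smul_apply, smul_eq_mul]
    ring
  rw [hexacode, show ({![1,0,0,1,ω,ω], ![0,1,0,ω,1,ω], ![0,0,1,ω,ω,1]} : Set (Fin 6 → F4))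
      = insert ![1,0,0,1,ω,ω] {![0,1,0,ω,1,ω], ![0,0,1,ω,ω,1]} from rfl,
    Submodule.mem_span_insert]
  constructor
  · rintro ⟨x, z, hz, rfl⟩
    rw [Submodule.mem_span_pair] at hz
    obtain ⟨y, w, rfl⟩ := hz
    obtain ⟨px, hx⟩ := phi_surj hω x
    obtain ⟨py, hy⟩ := phi_surj hω y
    obtain ⟨pw, hw⟩ := phi_surj hω w
    exact ⟨(px, py, pw), hG x y w _ hx hy hw⟩
  · rintro ⟨p, rfl⟩
    exact ⟨phi ω p.1, phi ω p.2.1 • ![0,1,0,ω,1,ω] + phi ω p.2.2 • ![0,0,1,ω,ω,1],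
      Submodule.mem_span_pair.2 ⟨_, _, rfl⟩, (hG _ _ _ p rfl rfl rfl).symm⟩

lemma wt_phi (hω : ω ^ 2 = ω + 1) (w : Fin 6 → K) : wt (fun i => phi ω (w i)) = mwt w := by
  have hset : {i | phi ω (w i) ≠ 0} = ↑(Finset.univ.filter fun i => w i ≠ 0) := by
    ext i
    simp only [Set.mem_setOf_eq, Finset.coe_filter, Finset.mem_univ, true_and]
    constructor
    · intro h hw; exact h (by rw [hw, phi_zero])
    · intro h hp; exact h (phi_eq_zero hω hp)
  rw [wt, hset, Set.ncard_coe_finset, mwt]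

set_option maxRecDepth 4000 in
lemma mc_inj : Function.Injective mc := by decide

set_option maxRecDepth 10000 in
lemma count_key : ∀ (j : Fin 6) (b : K), b ≠ 0 →
    (Finset.univ.filter fun p : K × K × K => mwt (mc p) = 4 ∧ mc p j = b).card = 10 ∧
    (Finset.univ.filter fun p : K × K × K => mwt (mc p) = 6 ∧ mc p j = b).card = 6 := by
  decide

end model

/-- The codewords of each nonzero weight of the hexacode form generalized 1-designs of
type 3: for every coordinate `j` and every nonzero `a ∈ GF(4)`, exactly 10 codewords of
weight 4 and exactly 6 codewords of weight 6 have `c j = a`. -/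
theorem hexacode_generalized_one_design (ω : F4) (hω : ω ^ 2 = ω + 1)
    (j : Fin 6) (a : F4) (ha : a ≠ 0) :
    {c : Fin 6 → F4 | c ∈ hexacode ω ∧ wt c = 4 ∧ c j = a}.ncard = 10 ∧
    {c : Fin 6 → F4 | c ∈ hexacode ω ∧ wt c = 6 ∧ c j = a}.ncard = 6 := by
  obtain ⟨b, hb⟩ := phi_surj hω a
  have hb0 : b ≠ 0 := fun h => ha (by rw [← hb, h, phi_zero])
  have hinj : Function.Injective (fun p : K × K × K => fun i => phi ω (mc p i)) := by
    intro p q h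
    apply mc_inj
    funext i
    exact phi_inj hω (congrFun h i)
  have hset : ∀ k : ℕ, {c : Fin 6 → F4 | c ∈ hexacode ω ∧ wt c = k ∧ c j = a}
      = (fun p : K × K × K => fun i => phi ω (mc p i)) ''
        {p : K × K × K | mwt (mc p) = k ∧ mc p j = b} := by
    intro k
    ext c
    simp only [Set.mem_setOf_eq, Set.mem_image]
    constructor
    · rintro ⟨hmem, hwt, hcj⟩
      obtain ⟨p, rfl⟩ := (mem_hexacode_iff hω c).1 hmem
      refine ⟨p, ⟨?_, ?_⟩, rfl⟩
      · rw [← wt_phi hω]; exact hwt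
      · apply phi_inj hω; rw [hb]; exact hcj
    · rintro ⟨p, ⟨hwt, hcj⟩, rfl⟩
      exact ⟨(mem_hexacode_iff hω _).2 ⟨p, rfl⟩, by rw [wt_phi hω, hwt],
        by simp only []; rw [hcj, hb]⟩
  have hkey := count_key j b hb0
  have hfin : ∀ k : ℕ, {p : K × K × K | mwt (mc p) = k ∧ mc p j = b}
      = ↑(Finset.univ.filter fun p : K × K × K => mwt (mc p) = k ∧ mc p j = b) := by
    intro k; ext p; simp
  constructor
  · rw [hset 4, Set.ncard_image_of_injective _ hinj, hfin 4, Set.ncard_coe_finset, hkey.1]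
  · rw [hset 6, Set.ncard_image_of_injective _ hinj, hfin 6, Set.ncard_coe_finset, hkey.2]
end

section
/- In the hexacode 𝒢₆ ⊆ GF(4)⁶ (the GF(4)-linear span of (1,0,0,1,ω,ω), (0,1,0,ω,1,ω), (0,0,1,ω,ω,1)), no codeword of weight 6 c-covers a codeword of weight 4; consequently all pairs of access groups arising from weight-4 and weight-6 codewords belong to the minimal access structure of the secret sharing scheme based on 𝒢₆. -/
/-- `a` is componentwisely covered (c-covered) by `b`: every nonzero component of `a`
equals the corresponding component of `b`. -/
def ccov {n : ℕ} (a b : Fin n → F4) : Prop := ∀ i, a i ≠ 0 → b i = a i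

/-- In the hexacode, no codeword of weight 6 c-covers a codeword of weight 4;
consequently all pairs of access groups arising from weight-4 and weight-6 codewords
belong to the minimal access structure. -/
theorem hexacode_weight_six_not_ccover_weight_four (ω : F4) (hω : ω ^ 2 = ω + 1)
    (c₁ c₂ : Fin 6 → F4) (h₁ : c₁ ∈ hexacode ω) (h₂ : c₂ ∈ hexacode ω)
    (hw₁ : wt c₁ = 6) (hw₂ : wt c₂ = 4) :
    ¬ ccov c₂ c₁ := by
  intro hcov
  unfold wt at hw₁ hw₂
  have h2 : (2 : F4) = 0 := by
    have := CharP.cast_eq_zero F4 2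
    exact_mod_cast this
  have hω0 : ω ≠ 0 := by
    rintro rfl
    rw [show (0:F4)^2 = 0 by ring] at hω
    exact one_ne_zero (by linear_combination -hω)
  -- the difference codeword
  have hd_mem : c₁ - c₂ ∈ hexacode ω := sub_mem h₁ h₂
  rw [hexacode] at hd_mem
  obtain ⟨p, z, hz, hx⟩ := Submodule.mem_span_insert.mp hd_mem
  obtain ⟨q, w, hw, hz'⟩ := Submodule.mem_span_insert.mp hz
  obtain ⟨r, hw'⟩ := Submodule.mem_span_singleton.mp hw
  subst hw' hz'
  have hd : ∀ i, c₁ i - c₂ i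
      = p * (![1,0,0,1,ω,ω] : Fin 6 → F4) i + (q * (![0,1,0,ω,1,ω] : Fin 6 → F4) i
        + r * (![0,0,1,ω,ω,1] : Fin 6 → F4) i) := by
    intro i
    have := congrFun hx i
    simp only [Pi.add_apply, Pi.smul_apply, smul_eq_mul] at this
    exact this
  have e0 : c₁ 0 - c₂ 0 = p := by have := hd 0; simpa using this
  have e1 : c₁ 1 - c₂ 1 = q := by have := hd 1; simpa using this
  have e2 : c₁ 2 - c₂ 2 = r := by have := hd 2; simpa using this
  have e3 : c₁ 3 - c₂ 3 = p + (q * ω + r * ω) := by have := hd 3; simpa using this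
  have e4 : c₁ 4 - c₂ 4 = p * ω + (q + r * ω) := by have := hd 4; simpa using this
  have e5 : c₁ 5 - c₂ 5 = p * ω + (q * ω + r) := by
    have := hd 5
    rw [show (![1,0,0,1,ω,ω] : Fin 6 → F4) 5 = ω from rfl,
        show (![0,1,0,ω,1,ω] : Fin 6 → F4) 5 = ω from rfl,
        show (![0,0,1,ω,ω,1] : Fin 6 → F4) 5 = 1 from rfl, mul_one] at this
    exact this
  -- all coordinates of c₁ are nonzero
  have hall : ∀ i, c₁ i ≠ 0 := by
    have hsub : {i | c₁ i ≠ 0} ⊆ Set.univ := Set.subset_univ _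
    have huniv : (Set.univ : Set (Fin 6)).ncard = 6 := by
      simp [Set.ncard_univ]
    have heq : {i | c₁ i ≠ 0} = Set.univ := by
      apply Set.eq_of_subset_of_ncard_le hsub _ Set.finite_univ
      rw [huniv, hw₁]
    intro i
    have : i ∈ {i | c₁ i ≠ 0} := heq ▸ Set.mem_univ i
    exact this
  -- the support of the difference
  have hiff : ∀ i, c₁ i - c₂ i ≠ 0 ↔ c₂ i = 0 := by
    intro i
    constructor
    · intro h
      by_contra hne
      exact h (by rw [hcov i hne]; ring)
    · intro h
      rw [h, sub_zero]
      exact hall i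
  have hS : {i : Fin 6 | c₁ i - c₂ i ≠ 0}.ncard = 2 := by
    have hcompl : {i : Fin 6 | c₁ i - c₂ i ≠ 0} = {i : Fin 6 | c₂ i ≠ 0}ᶜ := by
      ext i
      simp [hiff i]
    rw [hcompl]
    have h6 : Nat.card (Fin 6) = 6 := by simp
    have := Set.ncard_add_ncard_compl {i : Fin 6 | c₂ i ≠ 0}
    rw [hw₂, h6] at this
    omega
  -- helper: three distinct nonzero coordinates give a contradiction
  have hle : ∀ x y z : Fin 6, x ≠ y → x ≠ z → y ≠ z →
      c₁ x - c₂ x ≠ 0 → c₁ y - c₂ y ≠ 0 → c₁ z - c₂ z ≠ 0 → False := by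
    intro x y z hxy hxz hyz hx' hy' hz'
    have hsub : ({x, y, z} : Set (Fin 6)) ⊆ {i : Fin 6 | c₁ i - c₂ i ≠ 0} := by
      intro i hi
      rcases hi with rfl | rfl | rfl <;> assumption
    have h3 : ({x, y, z} : Set (Fin 6)).ncard = 3 := by
      rw [Set.ncard_insert_of_notMem (by simp [hxy, hxz]) (Set.toFinite _),
          Set.ncard_pair hyz]
    have := Set.ncard_le_ncard hsub (Set.toFinite _)
    rw [h3, hS] at this
    omega
  by_cases hp : p = 0 <;> by_cases hq : q = 0 <;> by_cases hr : r = 0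
  · -- p = q = r = 0 : difference is zero, but support has size 2
    obtain ⟨i, hi⟩ := Set.nonempty_of_ncard_ne_zero (by rw [hS]; norm_num :
      {i : Fin 6 | c₁ i - c₂ i ≠ 0}.ncard ≠ 0)
    have := hd i
    rw [hp, hq, hr] at this
    simp at this
    exact hi this
  · -- p = 0, q = 0, r ≠ 0 : coords 2, 3, 4 nonzero
    refine hle 2 3 4 (by decide) (by decide) (by decide) ?_ ?_ ?_
    · rw [e2]; exact hr
    · rw [e3, hp, hq]; intro h; exact mul_ne_zero hr hω0 (by linear_combination h)
    · rw [e4, hp, hq]; intro h; exact mul_ne_zero hr hω0 (by linear_combination h)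
  · -- p = 0, q ≠ 0, r = 0 : coords 1, 3, 4 nonzero
    refine hle 1 3 4 (by decide) (by decide) (by decide) ?_ ?_ ?_
    · rw [e1]; exact hq
    · rw [e3, hp, hr]; intro h; exact mul_ne_zero hq hω0 (by linear_combination h)
    · rw [e4, hp, hr]; intro h; exact hq (by linear_combination h)
  · -- p = 0, q ≠ 0, r ≠ 0
    by_cases h5 : q * ω + r = 0
    · -- then coord 4 equals q*ω ≠ 0
      refine hle 1 2 4 (by decide) (by decide) (by decide) ?_ ?_ ?_
      · rw [e1]; exact hq
      · rw [e2]; exact hr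
      · rw [e4, hp]; intro h
        exact mul_ne_zero hq hω0 (by linear_combination h - ω*h5 + q*hω + q*ω*h2)
    · refine hle 1 2 5 (by decide) (by decide) (by decide) ?_ ?_ ?_
      · rw [e1]; exact hq
      · rw [e2]; exact hr
      · rw [e5, hp]; intro h; exact h5 (by linear_combination h)
  · -- p ≠ 0, q = 0, r = 0 : coords 0, 3, 4
    refine hle 0 3 4 (by decide) (by decide) (by decide) ?_ ?_ ?_
    · rw [e0]; exact hp
    · rw [e3, hq, hr]; intro h; exact hp (by linear_combination h)
    · rw [e4, hq, hr]; intro h; exact mul_ne_zero hp hω0 (by linear_combination h)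
  · -- p ≠ 0, q = 0, r ≠ 0
    by_cases h3 : p + r * ω = 0
    · -- then coord 5 equals r*ω ≠ 0
      refine hle 0 2 5 (by decide) (by decide) (by decide) ?_ ?_ ?_
      · rw [e0]; exact hp
      · rw [e2]; exact hr
      · rw [e5, hq]; intro h
        exact mul_ne_zero hr hω0 (by linear_combination h - ω*h3 + r*hω + r*ω*h2)
    · refine hle 0 2 3 (by decide) (by decide) (by decide) ?_ ?_ ?_
      · rw [e0]; exact hp
      · rw [e2]; exact hr
      · rw [e3, hq]; intro h; exact h3 (by linear_combination h)
  · -- p ≠ 0, q ≠ 0, r = 0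
    by_cases h3 : p + q * ω = 0
    · -- then coord 4 equals q*ω ≠ 0
      refine hle 0 1 4 (by decide) (by decide) (by decide) ?_ ?_ ?_
      · rw [e0]; exact hp
      · rw [e1]; exact hq
      · rw [e4, hr]; intro h
        exact mul_ne_zero hq hω0 (by linear_combination h - ω*h3 + q*hω + q*ω*h2)
    · refine hle 0 1 3 (by decide) (by decide) (by decide) ?_ ?_ ?_
      · rw [e0]; exact hp
      · rw [e1]; exact hq
      · rw [e3, hr]; intro h; exact h3 (by linear_combination h)
  · -- all nonzero : coords 0, 1, 2
    exact hle 0 1 2 (by decide) (by decide) (by decide)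
      (by rw [e0]; exact hp) (by rw [e1]; exact hq) (by rw [e2]; exact hr)
end
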